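/- Let L/K be a finite Galois extension of degree n with Galois group G = {σ₁, …, σ_n}. For b₁, …, b_n ∈ L define the K-bilinear form f_{b₁,…,b_n}: L × L → K by f_{b₁,…,b_n}(x,y) = Tr^L_K((b₁σ₁(x) + ⋯ + b_nσ_n(x))y). Then the K-linear map L^n → Bil(L) sending (b₁, …, b_n) to f_{b₁,…,b_n} is surjective (indeed an isomorphism), so every K-bilinear form on L arises in this way; moreover, setting B_i = {f_{b,σ_i} : b ∈ L} where f_{b,σ_i}(x,y) = Tr^L_K(bσ_i(x)y), one has Bil(L) = B₁ ⊕ ⋯ ⊕ B_n, where each B_i has K-dimension n and every nonzero element of each B_i is non-degenerate. -/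

import Mathlib

variable {K L : Type*} [Field K] [Field L] [Algebra K L]

/-- The bilinear form `f_{b,σ}(x,y) = Tr^L_K (b * σ x * y)`. -/
noncomputable def galoisBilForm (b : L) (σ : L ≃ₐ[K] L) : (L →ₗ[K] L →ₗ[K] K) :=
  LinearMap.mk₂ K (fun x y => Algebra.trace K L (b * σ x * y))
    (fun x x' y => by
      try dsimp only
      rw [show b * σ (x + x') * y = b * σ x * y + b * σ x' * y by
          rw [map_add σ]; ring, map_add])
    (fun a x y => by
      try dsimp only
      rw [show b * σ (a • x) * y = a • (b * σ x * y) by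
          rw [map_smul σ]; simp only [smul_mul_assoc, mul_smul_comm], map_smul])
    (fun x y y' => by
      try dsimp only
      rw [show b * σ x * (y + y') = b * σ x * y + b * σ x * y' by ring, map_add])
    (fun a x y => by
      try dsimp only
      rw [show b * σ x * (a • y) = a • (b * σ x * y) by
          simp only [smul_mul_assoc, mul_smul_comm], map_smul])

/-- `b ↦ f_{b,σ}` as a `K`-linear map. -/
noncomputable def galoisBilFormL (σ : L ≃ₐ[K] L) : L →ₗ[K] (L →ₗ[K] L →ₗ[K] K) where
  toFun b := galoisBilForm b σ
  map_add' b b' := by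
    ext x y
    simp only [galoisBilForm, LinearMap.mk₂_apply, LinearMap.add_apply]
    rw [← map_add]; ring_nf
  map_smul' a b := by
    ext x y
    simp only [galoisBilForm, LinearMap.mk₂_apply, LinearMap.smul_apply, RingHom.id_apply]
    rw [← map_smul]; simp only [smul_mul_assoc]

/-- The `K`-linear map `Lⁿ → Bil(L)`,
`(b₁,…,b_n) ↦ ((x,y) ↦ Tr((b₁σ₁(x) + ⋯ + b_nσ_n(x))y))`. -/
noncomputable def phiBil (n : ℕ) (σ : Fin n → (L ≃ₐ[K] L)) :
    (Fin n → L) →ₗ[K] (L →ₗ[K] L →ₗ[K] K) :=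
  ∑ i, (galoisBilFormL (σ i)).comp (LinearMap.proj i)

section AuxProofs

variable {K L : Type*} [Field K] [Field L] [Algebra K L]

lemma phiBil_apply_apply' (n : ℕ) (σ : Fin n → (L ≃ₐ[K] L)) (b : Fin n → L) (x y : L) :
    phiBil n σ b x y = Algebra.trace K L ((∑ i, b i * σ i x) * y) := by
  simp [phiBil, galoisBilFormL, galoisBilForm, Finset.sum_mul, map_sum]

lemma sigma_linearIndependent (n : ℕ) (σ : Fin n → (L ≃ₐ[K] L))
    (hσ : Function.Injective σ) :
    LinearIndependent L (fun i : Fin n => (((σ i : L →ₐ[K] L) : L →* L) : L → L)) := by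
  refine (linearIndependent_monoidHom L L).comp
    (fun i => ((σ i : L →ₐ[K] L) : L →* L)) ?_
  intro i j h
  apply hσ
  ext x
  exact DFunLike.congr_fun h x

lemma phiBil_injective' [FiniteDimensional K L] [IsGalois K L]
    (n : ℕ) (σ : Fin n → (L ≃ₐ[K] L)) (hσ : Function.Injective σ) :
    Function.Injective (phiBil n σ) := by
  rw [injective_iff_map_eq_zero]
  intro b hb
  have h1 : ∀ x : L, ∑ i, b i * σ i x = 0 := by
    intro x
    apply (traceForm_nondegenerate K L).1
    intro y
    have h2 : phiBil n σ b x y = 0 := by rw [hb]; rfl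
    rw [phiBil_apply_apply'] at h2
    rwa [Algebra.traceForm_apply]
  have hzero : (∑ i, b i • (((σ i : L →ₐ[K] L) : L →* L) : L → L)) = 0 := by
    funext x
    simpa [Finset.sum_apply] using h1 x
  funext i
  exact Fintype.linearIndependent_iff.mp (sigma_linearIndependent n σ hσ) b hzero i

end AuxProofs

set_option maxHeartbeats 1000000 in
set_option synthInstance.maxHeartbeats 800000 in
/-- for a Galois extension of degree `n` with Galois group enumerated as
`σ₁, …, σ_n`, the map `(b₁,…,b_n) ↦ f_{b₁,…,b_n}` is a `K`-isomorphism of `Lⁿ` onto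
`Bil(L)`; moreover `Bil(L) = B₁ ⊕ ⋯ ⊕ B_n` where `Bᵢ = {f_{b,σᵢ} : b ∈ L}` has
dimension `n` and all its nonzero elements are non-degenerate. -/
theorem statement18 [FiniteDimensional K L] [IsGalois K L]
    (n : ℕ) (hn : Module.finrank K L = n)
    (σ : Fin n → (L ≃ₐ[K] L)) (henum : Function.Bijective σ) :
    Function.Bijective (phiBil n σ) ∧
    iSupIndep (fun i => LinearMap.range (galoisBilFormL (σ i))) ∧
    (⨆ i, LinearMap.range (galoisBilFormL (σ i))) = ⊤ ∧
    (∀ i, Module.finrank K (LinearMap.range (galoisBilFormL (σ i))) = n) ∧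
    (∀ i, ∀ f ∈ LinearMap.range (galoisBilFormL (σ i)), f ≠ 0 →
      LinearMap.ker f = ⊥) := by
  classical
  have hσinj := henum.1
  have hinj := phiBil_injective' n σ hσinj
  have hfr : Module.finrank K (Fin n → L) = Module.finrank K (L →ₗ[K] L →ₗ[K] K) := by
    rw [Module.finrank_pi_fintype, Module.finrank_linearMap, Module.finrank_linearMap,
      Module.finrank_self, hn]
    simp [Finset.sum_const, mul_comm]
  have hsurj := (LinearMap.injective_iff_surjective_of_finrank_eq_finrank (V := Fin n → L) (V₂ := L →ₗ[K] L →ₗ[K] K) hfr (f := phiBil n σ)).mp hinj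
  have hinj_i : ∀ i, Function.Injective (galoisBilFormL (K := K) (σ i)) := by
    intro i
    rw [injective_iff_map_eq_zero]
    intro c hc
    have hps : phiBil n σ (Pi.single i c) = 0 := by
      rw [phiBil]
      simp only [LinearMap.sum_apply, LinearMap.comp_apply, LinearMap.proj_apply]
      rw [Finset.sum_eq_single_of_mem i (Finset.mem_univ i)
        (fun j _ hj => by rw [Pi.single_eq_of_ne hj, map_zero])]
      simpa using hc
    have h0 : Pi.single i c = 0 := hinj (by rw [hps, map_zero])
    have := congrFun h0 i
    simpa using this
  have key : ∀ (b : Fin n → L), phiBil n σ b = ∑ i, galoisBilFormL (K := K) (σ i) (b i) := by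
    intro b
    rw [phiBil]
    simp [LinearMap.sum_apply]
  refine ⟨⟨hinj, hsurj⟩, ?_, ?_, ?_, ?_⟩
  · letI : ∀ i : Fin n, AddCommGroup
        ↥(LinearMap.range (galoisBilFormL (K := K) (σ i))) := fun _ =>
          @Submodule.addCommGroup K _ _ LinearMap.addCommGroup _ _
    apply iSupIndep_of_dfinsupp_lsum_injective
    rw [injective_iff_map_eq_zero]
    intro d hd
    have hmem : ∀ i, ∃ c : L, galoisBilFormL (K := K) (σ i) c
        = (d i : L →ₗ[K] L →ₗ[K] K) := fun i => (d i).2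
    choose b hb using hmem
    have hsum : phiBil n σ b = 0 := by
      rw [key]
      calc (∑ i, galoisBilFormL (K := K) (σ i) (b i))
          = ((DFinsupp.lsum ℕ) fun i =>
              (LinearMap.range (galoisBilFormL (K := K) (σ i))).subtype) d := by
            rw [DFinsupp.lsum_apply_apply, DFinsupp.sumAddHom_apply,
              DFinsupp.sum_eq_sum_fintype _ (fun i => map_zero _)]
            refine Finset.sum_congr rfl fun i _ => ?_
            rw [hb i]
            rfl
        _ = 0 := hd
    have hb0 : b = 0 := hinj (by rw [hsum, map_zero])
    have h5 : ∀ i, d i = 0 := by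
      intro i
      have h3 : ((d i : LinearMap.range (galoisBilFormL (K := K) (σ i))) :
          L →ₗ[K] L →ₗ[K] K) = 0 := by
        rw [← hb i, hb0]
        simp
      exact Submodule.coe_eq_zero.mp h3
    exact DFunLike.coe_injective (funext fun i => by show d i = _; rw [h5 i]; rfl)
  · rw [eq_top_iff]
    intro f _
    obtain ⟨b, rfl⟩ := hsurj f
    rw [key]
    exact Submodule.sum_mem _ fun i _ =>
      Submodule.mem_iSup_of_mem i ⟨b i, rfl⟩
  · intro i
    rw [LinearMap.finrank_range_of_inj (hinj_i i), hn]
  · rintro i f ⟨b, rfl⟩ hf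
    have hb : b ≠ 0 := fun h => hf (by rw [h, map_zero])
    rw [LinearMap.ker_eq_bot']
    intro x hx
    have h1 : b * σ i x = 0 := by
      apply (traceForm_nondegenerate K L).1
      intro y
      have h2 : ((galoisBilFormL (K := K) (σ i)) b) x y = 0 := by rw [hx]; rfl
      rw [Algebra.traceForm_apply]
      exact h2
    have : σ i x = 0 := by
      rcases mul_eq_zero.mp h1 with h | h
      · exact absurd h hb
      · exact h
    have := congrArg (σ i).symm this
    simpa using this
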